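/- arXiv:1508.01721 — 4 statements merged into one kernel-verified Lean document; each statement's English description precedes it below -/
import Mathlib

section
/- Let m ≥ 3 and t ≥ 1, and for i ∈ ℤ/m set g_i = s_i s_{i+m} s_{i+2m} ⋯ s_{i+(t−1)m} ∈ B(Ã_{tm−1}) (the generators on the right indexed by the corresponding residues in ℤ/tm). Then g_i g_{i+1} g_i = g_{i+1} g_i g_{i+1} for all i ∈ ℤ/m, and g_i g_j = g_j g_i for all i, j ∈ ℤ/m with i − j ≠ 1, −1. Consequently, there is a group homomorphism ψ : B(Ã_{m−1}) → B(Ã_{tm−1}) with ψ(s_i) = g_i for all i ∈ ℤ/m. -/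
/-- The braid relation word `s_i s_j s_i (s_j s_i s_j)⁻¹` in a free group. -/
def braidRelWord {I : Type*} (i j : I) : FreeGroup I :=
  FreeGroup.of i * FreeGroup.of j * FreeGroup.of i *
    (FreeGroup.of j * FreeGroup.of i * FreeGroup.of j)⁻¹

/-- The commutation relation word `s_i s_j (s_j s_i)⁻¹` in a free group. -/
def commRelWord {I : Type*} (i j : I) : FreeGroup I :=
  FreeGroup.of i * FreeGroup.of j * (FreeGroup.of j * FreeGroup.of i)⁻¹

/-- The defining relations of the affine braid group `B(Ã_{n-1})`: for `n ≥ 3` the braid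
relations `s_i s_{i+1} s_i = s_{i+1} s_i s_{i+1}` (`i ∈ ℤ/n`) and the commutation relations
`s_i s_j = s_j s_i` for `i - j ≠ ±1`; for `n = 2` there are no relations, so that
`B(Ã_1)` is the free group on two generators. -/
def affineBraidRels (n : ℕ) : Set (FreeGroup (ZMod n)) :=
  if n ≤ 2 then ∅
  else {r | (∃ i : ZMod n, r = braidRelWord i (i + 1)) ∨
            (∃ i j : ZMod n, i - j ≠ 1 ∧ i - j ≠ -1 ∧ r = commRelWord i j)}

/-- The affine braid group `B(Ã_{n-1})`. -/
abbrev AffineBraidGroup (n : ℕ) := PresentedGroup (affineBraidRels n)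

/-- The generator `s_i` of the affine braid group `B(Ã_{n-1})`, `i ∈ ℤ/n`. -/
def affineBraidGen (n : ℕ) (i : ZMod n) : AffineBraidGroup n := PresentedGroup.of i

/-- The element `g_i = s_i s_{i+m} s_{i+2m} ⋯ s_{i+(t-1)m}` of the affine braid group
`B(Ã_{tm−1})`, for `i ∈ ℤ/m` (the generators on the right indexed by the corresponding
residues in `ℤ/tm`). -/
def liftedGen (m t : ℕ) (i : ZMod m) : AffineBraidGroup (t * m) :=
  ((List.range t).map fun s =>
    affineBraidGen (t * m) ((i.val + s * m : ℕ) : ZMod (t * m))).prod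


-- relation in presented group
lemma rel_eq_one {α : Type*} {rels : Set (FreeGroup α)} {r : FreeGroup α} (hr : r ∈ rels) :
    PresentedGroup.mk rels r = 1 := by
  have : r ∈ Subgroup.normalClosure rels := Subgroup.subset_normalClosure hr
  exact (QuotientGroup.eq_one_iff r).mpr this

lemma affine_braid_rel {n : ℕ} (hn : 3 ≤ n) (i : ZMod n) :
    affineBraidGen n i * affineBraidGen n (i + 1) * affineBraidGen n i =
      affineBraidGen n (i + 1) * affineBraidGen n i * affineBraidGen n (i + 1) := by
  have hmem : braidRelWord i (i + 1) ∈ affineBraidRels n := by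
    unfold affineBraidRels
    rw [if_neg (by omega)]
    exact Or.inl ⟨i, rfl⟩
  have h := rel_eq_one hmem
  unfold braidRelWord at h
  simp only [map_mul, map_inv] at h
  have := mul_inv_eq_one.mp h
  simpa [affineBraidGen, PresentedGroup.of] using this

lemma affine_comm_rel {n : ℕ} (hn : 3 ≤ n) (i j : ZMod n) (h1 : i - j ≠ 1) (h2 : i - j ≠ -1) :
    Commute (affineBraidGen n i) (affineBraidGen n j) := by
  have hmem : commRelWord i j ∈ affineBraidRels n := by
    unfold affineBraidRels
    rw [if_neg (by omega)]
    exact Or.inr ⟨i, j, h1, h2, rfl⟩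
  have h := rel_eq_one hmem
  unfold commRelWord at h
  simp only [map_mul, map_inv] at h
  have := mul_inv_eq_one.mp h
  simpa [Commute, SemiconjBy, affineBraidGen, PresentedGroup.of] using this

section GroupLemmas
variable {G : Type*} [Group G]

lemma comm_prod (t : ℕ) (a b : ℕ → G)
    (h : ∀ s < t, ∀ s' < t, Commute (a s) (b s')) :
    Commute (((List.range t).map a).prod) (((List.range t).map b).prod) := by
  apply Commute.list_prod_right
  intro x hx
  simp only [List.mem_map, List.mem_range] at hx
  obtain ⟨s', hs', rfl⟩ := hx
  apply Commute.list_prod_left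
  intro y hy
  simp only [List.mem_map, List.mem_range] at hy
  obtain ⟨s, hs, rfl⟩ := hy
  exact h s hs s' hs'

lemma braid_step (t : ℕ) (a b : ℕ → G)
    (haa : ∀ s < t + 1, ∀ s' < t + 1, Commute (a s) (a s'))
    (hab : ∀ s < t + 1, ∀ s' < t + 1, s ≠ s' → Commute (a s) (b s')) :
    ((List.range (t+1)).map a).prod * ((List.range (t+1)).map b).prod *
      ((List.range (t+1)).map a).prod =
    (((List.range t).map a).prod * ((List.range t).map b).prod *
      ((List.range t).map a).prod) * (a t * b t * a t) := by
  have hA : ∀ s < t, Commute (a t) (a s) := fun s hs => haa t (by omega) s (by omega)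
  have hB : ∀ s < t, Commute (a t) (b s) := fun s hs => hab t (by omega) s (by omega) (by omega)
  have hA' : ∀ s < t, Commute (b t) (a s) := fun s hs =>
    (hab s (by omega) t (by omega) (by omega)).symm
  have cAt : Commute (a t) (((List.range t).map a).prod) :=
    Commute.list_prod_right _ _ (by
      intro y hy; simp only [List.mem_map, List.mem_range] at hy
      obtain ⟨s, hs, rfl⟩ := hy; exact hA s hs)
  have cBt : Commute (a t) (((List.range t).map b).prod) :=
    Commute.list_prod_right _ _ (by
      intro y hy; simp only [List.mem_map, List.mem_range] at hy
      obtain ⟨s, hs, rfl⟩ := hy; exact hB s hs)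
  have cAt' : Commute (b t) (((List.range t).map a).prod) :=
    Commute.list_prod_right _ _ (by
      intro y hy; simp only [List.mem_map, List.mem_range] at hy
      obtain ⟨s, hs, rfl⟩ := hy; exact hA' s hs)
  simp only [List.range_succ, List.map_append, List.prod_append, List.map_cons,
    List.map_nil, List.prod_cons, List.prod_nil, mul_one]
  set A := ((List.range t).map a).prod
  set B := ((List.range t).map b).prod
  calc A * a t * (B * b t) * (A * a t)
      = A * (a t * B) * b t * A * a t := by group
    _ = A * (B * a t) * b t * A * a t := by rw [cBt.eq]
    _ = A * B * (a t * (b t * A)) * a t := by group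
    _ = A * B * (a t * (A * b t)) * a t := by rw [cAt'.eq]
    _ = A * B * ((a t * A) * b t) * a t := by group
    _ = A * B * ((A * a t) * b t) * a t := by rw [cAt.eq]
    _ = A * B * A * (a t * b t * a t) := by group

lemma braid_prod (t : ℕ) (a b : ℕ → G)
    (haa : ∀ s < t, ∀ s' < t, Commute (a s) (a s'))
    (hbb : ∀ s < t, ∀ s' < t, Commute (b s) (b s'))
    (hab : ∀ s < t, ∀ s' < t, s ≠ s' → Commute (a s) (b s'))
    (hbr : ∀ s < t, a s * b s * a s = b s * a s * b s) :
    ((List.range t).map a).prod * ((List.range t).map b).prod * ((List.range t).map a).prod =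
    ((List.range t).map b).prod * ((List.range t).map a).prod * ((List.range t).map b).prod := by
  induction t with
  | zero => simp
  | succ t ih =>
    rw [braid_step t a b haa hab,
        braid_step t b a hbb (fun s hs s' hs' hne => (hab s' hs' s hs (Ne.symm hne)).symm)]
    rw [ih (fun s hs s' hs' => haa s (by omega) s' (by omega))
        (fun s hs s' hs' => hbb s (by omega) s' (by omega))
        (fun s hs s' hs' hne => hab s (by omega) s' (by omega) hne)
        (fun s hs => hbr s (by omega)),
        hbr t (by omega)]

lemma rotate_prod (t : ℕ) (h : ℕ → G) (h0 : h t = h 0)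
    (hc : ∀ s < t, Commute (h 0) (h s)) :
    ((List.range t).map (fun s => h (s + 1))).prod = ((List.range t).map h).prod := by
  have key : ((List.range (t+1)).map h).prod = h 0 * ((List.range t).map (fun s => h (s + 1))).prod := by
    rw [List.range_succ_eq_map, List.map_cons, List.prod_cons, List.map_map]
    rfl
  have key2 : ((List.range (t+1)).map h).prod = ((List.range t).map h).prod * h 0 := by
    rw [List.range_succ, List.map_append, List.prod_append]
    simp [h0]
  have hcP : Commute (h 0) (((List.range t).map h).prod) :=
    Commute.list_prod_right _ _ (by
      intro y hy; simp only [List.mem_map, List.mem_range] at hy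
      obtain ⟨s, hs, rfl⟩ := hy; exact hc s hs)
  have : h 0 * ((List.range t).map (fun s => h (s + 1))).prod =
      ((List.range t).map h).prod * h 0 := by rw [← key, key2]
  rw [← hcP.eq] at this
  exact mul_left_cancel this

end GroupLemmas

section Main
variable {m t : ℕ}

lemma zmod_two_ne_zero (hm : 3 ≤ m) : (2 : ZMod m) ≠ 0 := by
  intro h
  have h2 : ((2 : ℕ) : ZMod m) = 0 := by push_cast; exact h
  rw [ZMod.natCast_eq_zero_iff] at h2
  have := Nat.le_of_dvd (by norm_num) h2
  omega

lemma zmod_zero_ne_one (hm : 3 ≤ m) : (0 : ZMod m) ≠ 1 := by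
  haveI : Fact (1 < m) := ⟨by omega⟩
  exact zero_ne_one

lemma zmod_zero_ne_negone (hm : 3 ≤ m) : (0 : ZMod m) ≠ -1 := by
  intro h
  apply zmod_zero_ne_one hm
  linear_combination -h

lemma gen_comm_of (hm : 3 ≤ m) (ht : 1 ≤ t) (x y : ℕ)
    (h1 : (x : ZMod m) - y ≠ 1) (h2 : (x : ZMod m) - y ≠ -1) :
    Commute (affineBraidGen (t * m) x) (affineBraidGen (t * m) y) := by
  have hn : 3 ≤ t * m := le_trans hm (Nat.le_mul_of_pos_left m ht)
  apply affine_comm_rel hn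
  · intro h
    apply h1
    have h' := congrArg (ZMod.castHom (dvd_mul_left m t) (ZMod m)) h
    simpa only [map_sub, map_natCast, map_one] using h'
  · intro h
    apply h2
    have h' := congrArg (ZMod.castHom (dvd_mul_left m t) (ZMod m)) h
    simpa only [map_sub, map_natCast, map_one, map_neg] using h'

lemma castm_c (hm : 0 < m) (s : ℕ) : ((s * m : ℕ) : ZMod m) = 0 := by
  push_cast
  simp [ZMod.natCast_self]

lemma castm_a (hm : 0 < m) (i : ZMod m) (s : ℕ) : ((i.val + s * m : ℕ) : ZMod m) = i := by
  haveI : NeZero m := ⟨by omega⟩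
  push_cast
  simp [ZMod.natCast_val, ZMod.cast_id, ZMod.natCast_self]

lemma castm_b (hm : 0 < m) (i : ZMod m) (s : ℕ) :
    ((i.val + 1 + s * m : ℕ) : ZMod m) = i + 1 := by
  haveI : NeZero m := ⟨by omega⟩
  push_cast
  simp [ZMod.natCast_val, ZMod.cast_id, ZMod.natCast_self]

lemma mul_cast_ne {s s' : ℕ} (hm : 0 < m) (hs : s < t) (hs' : s' < t)
    (h : ((s * m : ℕ) : ZMod (t * m)) = ((s' * m : ℕ) : ZMod (t * m))) : s = s' := by
  rw [ZMod.natCast_eq_natCast_iff] at h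
  have h2 := Nat.ModEq.mul_right_cancel' (m := t) (by omega) h
  rw [Nat.ModEq, Nat.mod_eq_of_lt hs, Nat.mod_eq_of_lt hs'] at h2
  exact h2

lemma lifted_comm (hm : 3 ≤ m) (ht : 1 ≤ t) (i j : ZMod m)
    (h1 : i - j ≠ 1) (h2 : i - j ≠ -1) :
    liftedGen m t i * liftedGen m t j = liftedGen m t j * liftedGen m t i := by
  refine comm_prod t _ _ (fun s _ s' _ => ?_)
  apply gen_comm_of hm ht
  · rw [castm_a (by omega) i s, castm_a (by omega) j s']
    exact h1
  · rw [castm_a (by omega) i s, castm_a (by omega) j s']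
    exact h2

lemma lifted_succ (hm : 3 ≤ m) (ht : 1 ≤ t) (i : ZMod m) :
    liftedGen m t (i + 1) = ((List.range t).map fun s =>
      affineBraidGen (t * m) ((i.val + 1 + s * m : ℕ) : ZMod (t * m))).prod := by
  haveI : NeZero m := ⟨by omega⟩
  have hvlt := ZMod.val_lt i
  rcases Nat.lt_or_ge (i.val + 1) m with hv | hv
  · have hval : (i + 1).val = i.val + 1 := by
      have hcast : i + 1 = ((i.val + 1 : ℕ) : ZMod m) := by
        push_cast
        simp [ZMod.natCast_val, ZMod.cast_id]
      rw [hcast, ZMod.val_cast_of_lt hv]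
    unfold liftedGen
    simp only [hval]
  · have hvm : i.val + 1 = m := by omega
    have hi1 : i + 1 = 0 := by
      have hcast : i + 1 = ((i.val + 1 : ℕ) : ZMod m) := by
        push_cast
        simp [ZMod.natCast_val, ZMod.cast_id]
      rw [hcast, hvm, ZMod.natCast_self]
    rw [hi1]
    unfold liftedGen
    have hrhs : (fun s => affineBraidGen (t * m) ((i.val + 1 + s * m : ℕ) : ZMod (t * m))) =
        fun s => affineBraidGen (t * m) (((s + 1) * m : ℕ) : ZMod (t * m)) := by
      funext s
      congr 1
      congr 1
      have hms : (s + 1) * m = s * m + m := by ring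
      omega
    have hlhs : (fun s => affineBraidGen (t * m) (((0 : ZMod m).val + s * m : ℕ) : ZMod (t * m))) =
        fun s => affineBraidGen (t * m) ((s * m : ℕ) : ZMod (t * m)) := by
      funext s
      simp [ZMod.val_zero]
    rw [hlhs, hrhs]
    exact (rotate_prod t (fun s => affineBraidGen (t * m) ((s * m : ℕ) : ZMod (t * m)))
      (by norm_num [ZMod.natCast_self])
      (fun s _ => by
        apply gen_comm_of hm ht
        · rw [castm_c (by omega), castm_c (by omega)]
          simpa using zmod_zero_ne_one hm
        · rw [castm_c (by omega), castm_c (by omega)]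
          simpa using zmod_zero_ne_negone hm)).symm

lemma lifted_braid (hm : 3 ≤ m) (ht : 1 ≤ t) (i : ZMod m) :
    liftedGen m t i * liftedGen m t (i + 1) * liftedGen m t i =
      liftedGen m t (i + 1) * liftedGen m t i * liftedGen m t (i + 1) := by
  have hn : 3 ≤ t * m := le_trans hm (Nat.le_mul_of_pos_left m ht)
  rw [lifted_succ hm ht i]
  show ((List.range t).map fun s =>
      affineBraidGen (t * m) ((i.val + s * m : ℕ) : ZMod (t * m))).prod * _ * _ = _
  apply braid_prod t
    (fun s => affineBraidGen (t * m) ((i.val + s * m : ℕ) : ZMod (t * m)))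
    (fun s => affineBraidGen (t * m) ((i.val + 1 + s * m : ℕ) : ZMod (t * m)))
  · intro s _ s' _
    apply gen_comm_of hm ht
    · rw [castm_a (by omega) i s, castm_a (by omega) i s']
      simpa using zmod_zero_ne_one hm
    · rw [castm_a (by omega) i s, castm_a (by omega) i s']
      simpa using zmod_zero_ne_negone hm
  · intro s _ s' _
    apply gen_comm_of hm ht
    · rw [castm_b (by omega) i s, castm_b (by omega) i s']
      simpa using zmod_zero_ne_one hm
    · rw [castm_b (by omega) i s, castm_b (by omega) i s']
      simpa using zmod_zero_ne_negone hm
  · intro s hs s' hs' hne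
    apply affine_comm_rel hn
    · intro h
      have h' := congrArg (ZMod.castHom (dvd_mul_left m t) (ZMod m)) h
      simp only [map_sub, map_natCast, map_one] at h'
      rw [castm_a (by omega) i s, castm_b (by omega) i s'] at h'
      apply zmod_two_ne_zero hm
      linear_combination -h'
    · intro h
      apply hne
      apply mul_cast_ne (t := t) (by omega : 0 < m) hs hs'
      push_cast at h ⊢
      linear_combination h
  · intro s _
    have hb : ((i.val + 1 + s * m : ℕ) : ZMod (t * m)) =
        ((i.val + s * m : ℕ) : ZMod (t * m)) + 1 := by
      push_cast
      ring
    rw [hb]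
    exact affine_braid_rel hn _

end Main

/-- Let `m ≥ 3`, `t ≥ 1` and for `i ∈ ℤ/m` set `g_i = s_i s_{i+m} ⋯ s_{i+(t−1)m} ∈ B(Ã_{tm−1})`.
Then `g_i g_{i+1} g_i = g_{i+1} g_i g_{i+1}` for all `i ∈ ℤ/m`, `g_i g_j = g_j g_i` for all
`i, j ∈ ℤ/m` with `i − j ≠ 1, −1`, and consequently there is a group homomorphism
`ψ : B(Ã_{m−1}) → B(Ã_{tm−1})` with `ψ(s_i) = g_i` for all `i ∈ ℤ/m`. -/
theorem liftedGen_relations (m t : ℕ) (hm : 3 ≤ m) (ht : 1 ≤ t) :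
    (∀ i : ZMod m,
      liftedGen m t i * liftedGen m t (i + 1) * liftedGen m t i =
        liftedGen m t (i + 1) * liftedGen m t i * liftedGen m t (i + 1)) ∧
    (∀ i j : ZMod m, i - j ≠ 1 → i - j ≠ -1 →
      liftedGen m t i * liftedGen m t j = liftedGen m t j * liftedGen m t i) ∧
    ∃ ψ : AffineBraidGroup m →* AffineBraidGroup (t * m),
      ∀ i : ZMod m, ψ (affineBraidGen m i) = liftedGen m t i := by

  refine ⟨fun i => lifted_braid hm ht i, fun i j h1 h2 => lifted_comm hm ht i j h1 h2, ?_⟩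
  have hrel : ∀ r ∈ affineBraidRels m, FreeGroup.lift (liftedGen m t) r = 1 := by
    intro r hr
    unfold affineBraidRels at hr
    rw [if_neg (by omega)] at hr
    rcases hr with ⟨i, rfl⟩ | ⟨i, j, h1, h2, rfl⟩
    · simp only [braidRelWord, map_mul, map_inv, FreeGroup.lift_apply_of]
      rw [mul_inv_eq_one]
      exact lifted_braid hm ht i
    · simp only [commRelWord, map_mul, map_inv, FreeGroup.lift_apply_of]
      rw [mul_inv_eq_one]
      exact lifted_comm hm ht i j h1 h2
  exact ⟨PresentedGroup.toGroup hrel, fun i => PresentedGroup.toGroup.of hrel⟩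
end

section
/- Let m ≥ 2. Each σ_i (i ∈ ℤ/m) is an automorphism of the free group F_{m+1}, and when m ≥ 3 these automorphisms satisfy the defining relations of B(Ã_{m−1}): σ_i σ_{i+1} σ_i = σ_{i+1} σ_i σ_{i+1} for all i ∈ ℤ/m, and σ_i σ_j = σ_j σ_i for all i, j ∈ ℤ/m with i − j ≠ 1, −1. Consequently, for every m ≥ 2 there is a group homomorphism B(Ã_{m−1}) → Aut(F_{m+1}) sending s_i to σ_i for all i ∈ ℤ/m. -/
/-- The free group `F_{m+1}` on generators `y_0, …, y_{m−1}, y`: `y_j = of (some j)` for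
`j ∈ ℤ/m` and `y = of none`. The map `σ_i` on generators: `σ_i(y_i) = y_{i+1}`,
`σ_i(y_{i+1}) = y_{i+1}⁻¹ y_i y_{i+1}`, `σ_i(y_j) = y_j` for `j ≠ i, i+1`, `σ_i(y) = y`. -/
def sigmaMap (m : ℕ) (i : ZMod m) :
    Option (ZMod m) → FreeGroup (Option (ZMod m))
  | none => FreeGroup.of none
  | some j =>
    if j = i then FreeGroup.of (some (i + 1))
    else if j = i + 1 then
      (FreeGroup.of (some (i + 1)))⁻¹ * FreeGroup.of (some i) * FreeGroup.of (some (i + 1))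
    else FreeGroup.of (some j)

/-- The endomorphism `σ_i` of the free group `F_{m+1}` induced by `sigmaMap`. -/
def sigmaHom (m : ℕ) (i : ZMod m) :
    FreeGroup (Option (ZMod m)) →* FreeGroup (Option (ZMod m)) :=
  FreeGroup.lift (sigmaMap m i)

def tauMap (m : ℕ) (i : ZMod m) :
    Option (ZMod m) → FreeGroup (Option (ZMod m))
  | none => FreeGroup.of none
  | some j =>
    if j = i + 1 then FreeGroup.of (some i)
    else if j = i then
      FreeGroup.of (some i) * FreeGroup.of (some (i + 1)) * (FreeGroup.of (some i))⁻¹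
    else FreeGroup.of (some j)

def tauHom (m : ℕ) (i : ZMod m) :
    FreeGroup (Option (ZMod m)) →* FreeGroup (Option (ZMod m)) :=
  FreeGroup.lift (tauMap m i)

lemma zmodOneNeZero (m : ℕ) (hm : 2 ≤ m) : (1 : ZMod m) ≠ 0 := by
  haveI : NeZero m := ⟨by omega⟩
  have : ((1 : ℕ) : ZMod m) ≠ 0 := by
    rw [Ne, ZMod.natCast_eq_zero_iff]
    intro h; have := Nat.le_of_dvd one_pos h; omega
  simpa using this

lemma zmodTwoNeZero (m : ℕ) (hm : 3 ≤ m) : (2 : ZMod m) ≠ 0 := by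
  haveI : NeZero m := ⟨by omega⟩
  have : ((2 : ℕ) : ZMod m) ≠ 0 := by
    rw [Ne, ZMod.natCast_eq_zero_iff]
    intro h; have := Nat.le_of_dvd two_pos h; omega
  simpa using this

lemma sigma_tau (m : ℕ) (hm : 2 ≤ m) (i : ZMod m) :
    (sigmaHom m i).comp (tauHom m i) = MonoidHom.id _ := by
  have h1 : (1 : ZMod m) ≠ 0 := zmodOneNeZero m hm
  have ha : i + 1 ≠ i := fun h => h1 (by linear_combination h)
  have hb : i ≠ i + 1 := ha.symm
  apply FreeGroup.ext_hom
  rintro (_ | j)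
  · simp [sigmaHom, tauHom, tauMap, sigmaMap]
  · by_cases hj1 : j = i + 1
    · subst hj1
      simp [sigmaHom, tauHom, tauMap, sigmaMap, ha, hb]
    · by_cases hj0 : j = i
      · subst hj0
        simp [sigmaHom, tauHom, tauMap, sigmaMap, ha, hb]
        group
      · simp [sigmaHom, tauHom, tauMap, sigmaMap, hj0, hj1]

lemma tau_sigma (m : ℕ) (hm : 2 ≤ m) (i : ZMod m) :
    (tauHom m i).comp (sigmaHom m i) = MonoidHom.id _ := by
  have h1 : (1 : ZMod m) ≠ 0 := zmodOneNeZero m hm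
  have ha : i + 1 ≠ i := fun h => h1 (by linear_combination h)
  have hb : i ≠ i + 1 := ha.symm
  apply FreeGroup.ext_hom
  rintro (_ | j)
  · simp [sigmaHom, tauHom, tauMap, sigmaMap]
  · by_cases hj0 : j = i
    · subst hj0
      simp [sigmaHom, tauHom, tauMap, sigmaMap, ha, hb]
    · by_cases hj1 : j = i + 1
      · subst hj1
        simp [sigmaHom, tauHom, tauMap, sigmaMap, ha, hb]
        group
      · simp [sigmaHom, tauHom, tauMap, sigmaMap, hj0, hj1]

lemma braid_rel (m : ℕ) (hm : 3 ≤ m) (i : ZMod m) :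
    (sigmaHom m i).comp ((sigmaHom m (i + 1)).comp (sigmaHom m i)) =
      (sigmaHom m (i + 1)).comp ((sigmaHom m i).comp (sigmaHom m (i + 1))) := by
  have h1 : (1 : ZMod m) ≠ 0 := zmodOneNeZero m (by omega)
  have h2 : (2 : ZMod m) ≠ 0 := zmodTwoNeZero m hm
  have ha : i + 1 ≠ i := fun h => h1 (by linear_combination h)
  have hb : i ≠ i + 1 := ha.symm
  have hc : i + 1 + 1 ≠ i := fun h => h2 (by linear_combination h)
  have hd : i ≠ i + 1 + 1 := hc.symm
  have he : i + 1 + 1 ≠ i + 1 := fun h => h1 (by linear_combination h)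
  have hf : i + 1 ≠ i + 1 + 1 := he.symm
  apply FreeGroup.ext_hom
  rintro (_ | j)
  · simp [sigmaHom, sigmaMap]
  · by_cases hj0 : j = i
    · subst hj0
      simp [sigmaHom, sigmaMap, ha, hb, hc, hd, he, hf]
    · by_cases hj1 : j = i + 1
      · subst hj1
        simp [sigmaHom, sigmaMap, ha, hb, hc, hd, he, hf]
      · by_cases hj2 : j = i + 1 + 1
        · subst hj2
          simp [sigmaHom, sigmaMap, ha, hb, hc, hd, he, hf]
          group
        · simp [sigmaHom, sigmaMap, hj0, hj1, hj2]

lemma comm_rel (m : ℕ) (i j : ZMod m) (h1 : i - j ≠ 1) (h2 : i - j ≠ -1) :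
    (sigmaHom m i).comp (sigmaHom m j) = (sigmaHom m j).comp (sigmaHom m i) := by
  by_cases hij : i = j
  · subst hij; rfl
  · have ha : i ≠ j + 1 := fun h => h1 (by linear_combination h)
    have hb : j + 1 ≠ i := ha.symm
    have hc : i + 1 ≠ j := fun h => h2 (by linear_combination h)
    have hd : j ≠ i + 1 := hc.symm
    have he : i + 1 ≠ j + 1 := fun h => hij (by linear_combination h)
    have hf : j + 1 ≠ i + 1 := he.symm
    have hji : j ≠ i := Ne.symm hij
    have h10 : (1 : ZMod m) ≠ 0 := fun h => h1 (by linear_combination (i - j - 1) * h)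
    apply FreeGroup.ext_hom
    rintro (_ | k)
    · simp [sigmaHom, sigmaMap]
    · by_cases hk0 : k = i
      · subst hk0
        simp [sigmaHom, sigmaMap, ha, hb, hc, hd, he, hf, hij, hji, h10]
      · by_cases hk1 : k = i + 1
        · subst hk1
          simp [sigmaHom, sigmaMap, ha, hb, hc, hd, he, hf, hij, hji, h10]
        · by_cases hk2 : k = j
          · subst hk2
            simp [sigmaHom, sigmaMap, ha, hb, hc, hd, he, hf, hij, hji, h10]
          · by_cases hk3 : k = j + 1
            · subst hk3
              simp [sigmaHom, sigmaMap, ha, hb, hc, hd, he, hf, hij, hji, h10]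
            · simp [sigmaHom, sigmaMap, hk0, hk1, hk2, hk3]

/-- Let `m ≥ 2`. Each `σ_i` (`i ∈ ℤ/m`) is an automorphism of the free group `F_{m+1}`, and
when `m ≥ 3` these automorphisms satisfy the defining relations of `B(Ã_{m−1})`:
`σ_i σ_{i+1} σ_i = σ_{i+1} σ_i σ_{i+1}` for all `i ∈ ℤ/m`, and `σ_i σ_j = σ_j σ_i` for all
`i, j ∈ ℤ/m` with `i − j ≠ 1, −1`. Consequently, for every `m ≥ 2` there is a group
homomorphism `B(Ã_{m−1}) → Aut(F_{m+1})` sending `s_i` to `σ_i` for all `i ∈ ℤ/m`. -/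
theorem sigmaHom_relations_and_hom (m : ℕ) (hm : 2 ≤ m) :
    (∀ i : ZMod m, Function.Bijective (sigmaHom m i)) ∧
    (3 ≤ m →
      (∀ i : ZMod m,
        (sigmaHom m i).comp ((sigmaHom m (i + 1)).comp (sigmaHom m i)) =
          (sigmaHom m (i + 1)).comp ((sigmaHom m i).comp (sigmaHom m (i + 1)))) ∧
      (∀ i j : ZMod m, i - j ≠ 1 → i - j ≠ -1 →
        (sigmaHom m i).comp (sigmaHom m j) = (sigmaHom m j).comp (sigmaHom m i))) ∧
    ∃ Φ : AffineBraidGroup m →* MulAut (FreeGroup (Option (ZMod m))),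
      ∀ (i : ZMod m) (x : FreeGroup (Option (ZMod m))),
        Φ (affineBraidGen m i) x = sigmaHom m i x := by
  have hbij : ∀ i : ZMod m, Function.Bijective (sigmaHom m i) := by
    intro i
    refine Function.bijective_iff_has_inverse.mpr ⟨tauHom m i, ?_, ?_⟩
    · intro x
      exact DFunLike.congr_fun (tau_sigma m hm i) x
    · intro x
      exact DFunLike.congr_fun (sigma_tau m hm i) x
  refine ⟨hbij, fun h3 => ⟨braid_rel m h3, fun i j => comm_rel m i j⟩, ?_⟩
  set E : ZMod m → MulAut (FreeGroup (Option (ZMod m))) :=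
    fun i => MulEquiv.ofBijective (sigmaHom m i) (hbij i) with hE
  have hEapp : ∀ (i : ZMod m) x, E i x = sigmaHom m i x := fun i x => rfl
  have hrel : ∀ r ∈ affineBraidRels m, FreeGroup.lift E r = 1 := by
    intro r hr
    unfold affineBraidRels at hr
    split_ifs at hr with h
    · exact absurd hr (Set.notMem_empty r)
    · have h3 : 3 ≤ m := by omega
      rcases hr with ⟨i, rfl⟩ | ⟨i, j, h1, h2, rfl⟩
      · have hb := braid_rel m h3 i
        simp only [braidRelWord, map_mul, map_inv, FreeGroup.lift_apply_of, mul_inv_eq_one]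
        ext x
        simp only [MulAut.mul_apply, hEapp]
        exact DFunLike.congr_fun hb x
      · have hc := comm_rel m i j h1 h2
        simp only [commRelWord, map_mul, map_inv, FreeGroup.lift_apply_of, mul_inv_eq_one]
        ext x
        simp only [MulAut.mul_apply, hEapp]
        exact DFunLike.congr_fun hc x
  refine ⟨PresentedGroup.toGroup hrel, fun i x => ?_⟩
  rw [affineBraidGen, PresentedGroup.toGroup.of]
  exact hEapp i x
end

section
/- For every c ∈ 𝒮_N(k), the element 1 − e_1 + u_c is a unit of 𝒩, and ρ ∘ μ_c = σ ∘ μ_c ∘ ρ, where σ is the inner automorphism of 𝒩 defined by σ(x) = (1 − e_1 + u_c)^{−1} x (1 − e_1 + u_c). In particular, ρ ∘ μ_c and μ_c ∘ ρ coincide modulo inner automorphisms. -/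
/-- `pathProd e β i a` is the path `β_{i,a} = β_{i+a-1} ⋯ β_{i+1} β_i` of length `a`
starting at the vertex `i` of the cyclic quiver with vertex set `ZMod q`
(with `pathProd e β i 0 = e i` the trivial path at `i`). -/
def pathProd {q : ℕ} {R : Type*} [Mul R] (e β : ZMod q → R) (i : ZMod q) : ℕ → R
  | 0 => e i
  | a + 1 => β (i + (a : ZMod q)) * pathProd e β i a

/-- Here `𝒩` is the selfinjective Nakayama algebra `𝒩_{nm,tm}`, presented by:
idempotents `e i` and arrows `β i` (`i ∈ ℤ/nm`), the paths `β_{i,a}` (`0 ≤ a ≤ tm`) form a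
`k`-basis, `∑ e i = 1`, and products of basis paths are concatenations when defined and of
length `≤ tm`, and `0` otherwise. With `N = ⌊(t+n−1)/n⌋`, `c ∈ 𝒮_N(k)` (a sequence
`c : Fin N → k` with first entry nonzero), `u_c = ∑_{i=1}^N c_i β_{1,(i−1)nm}`, `μ = μ_c`
and `ρ` the rotation, the element `1 − e_1 + u_c` is a unit `v` of `𝒩` and
`ρ ∘ μ_c = σ ∘ μ_c ∘ ρ`, where `σ(x) = v⁻¹ x v`. -/
theorem rho_mu_comm_mod_inner {k : Type*} [Field k] [IsAlgClosed k] (m n t : ℕ)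
    (hm : 0 < m) (hn : 0 < n) (ht : 0 < t) (hcop : Nat.Coprime n t)
    [NeZero (n * m)]
    {𝒩 : Type*} [Ring 𝒩] [Algebra k 𝒩] (e β : ZMod (n * m) → 𝒩)
    (hbasis : ∃ B : Module.Basis (ZMod (n * m) × Fin (t * m + 1)) k 𝒩,
      ∀ x, B x = pathProd e β x.1 x.2)
    (hone : ∑ i : ZMod (n * m), e i = 1)
    (hmul : ∀ (i j : ZMod (n * m)) (a b : ℕ), a ≤ t * m → b ≤ t * m →
      pathProd e β j a * pathProd e β i b =
        if j = i + (b : ZMod (n * m)) ∧ a + b ≤ t * m then pathProd e β i (a + b) else 0)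
    (c : Fin ((t + n - 1) / n) → k) (hc : c ⟨0, Nat.div_pos (by omega) hn⟩ ≠ 0)
    (μ : 𝒩 ≃ₐ[k] 𝒩)
    (hμe : ∀ i, μ (e i) = e i)
    (hμβ : ∀ i, i ≠ 0 → μ (β i) = β i)
    (hμβ0 : μ (β 0) =
      (∑ i : Fin ((t + n - 1) / n), c i • pathProd e β 1 ((i : ℕ) * (n * m))) * β 0)
    (ρ : 𝒩 ≃ₐ[k] 𝒩)
    (hρe : ∀ i, ρ (e i) = e (i + 1)) (hρβ : ∀ i, ρ (β i) = β (i + 1)) :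
    ∃ v : 𝒩ˣ,
      (v : 𝒩) = 1 - e 1 +
          ∑ i : Fin ((t + n - 1) / n), c i • pathProd e β 1 ((i : ℕ) * (n * m)) ∧
      ∀ x : 𝒩, ρ (μ x) = ↑v⁻¹ * μ (ρ x) * ↑v := by
    classical
  obtain ⟨B, hB⟩ := hbasis
  have htm : 0 < t * m := Nat.mul_pos ht hm
  have hq : 0 < n * m := Nat.mul_pos hn hm
  have hN0 : 0 < (t + n - 1) / n := Nat.div_pos (by omega) hn
  set P : ZMod (n*m) → ℕ → 𝒩 := pathProd e β with hPdef
  set U : 𝒩 := ∑ i : Fin ((t + n - 1) / n), c i • P 1 ((i : ℕ) * (n * m)) with hUdef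
  set v : 𝒩 := 1 - e 1 + U with hvdef
  have hcast : ∀ s : ℕ, ((s * (n * m) : ℕ) : ZMod (n * m)) = 0 := by
    intro s; rw [Nat.cast_mul, ZMod.natCast_self, mul_zero]
  have hP0 : ∀ i, P i 0 = e i := fun _ => rfl
  have hPsucc : ∀ i a, P i (a + 1) = β (i + (a : ZMod (n*m))) * P i a := fun _ _ => rfl
  have hP1 : ∀ j, P j 1 = β j * e j := by
    intro j; rw [hPsucc, hP0]; norm_num
  have hlong : ∀ (i : ZMod (n*m)) (a : ℕ), t*m < a → P i a = 0 := by
    intro i a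
    induction a with
    | zero => omega
    | succ a ih =>
      intro h
      rcases Nat.lt_or_ge (t*m) a with h' | h'
      · rw [hPsucc, ih h', mul_zero]
      · have ha : a = t*m := by omega
        subst ha
        have h1 : e (i + ((t*m : ℕ) : ZMod (n*m))) * P i (t*m) = P i (t*m) := by
          have h := hmul i (i + ((t*m:ℕ) : ZMod (n*m))) 0 (t*m) (Nat.zero_le _) le_rfl
          rw [hP0] at h
          simpa using h
        rw [hPsucc, ← h1, ← mul_assoc, ← hP1]
        rw [hmul i (i + ((t*m:ℕ) : ZMod (n*m))) 1 (t*m) (by omega) le_rfl]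
        simp [show ¬(1 + t*m ≤ t*m) by omega]
  have hmul' : ∀ (i j : ZMod (n*m)) (a b : ℕ),
      P j a * P i b = if j = i + (b : ZMod (n*m)) then P i (a + b) else 0 := by
    intro i j a b
    by_cases ha : a ≤ t*m
    · by_cases hb : b ≤ t*m
      · rw [hmul i j a b ha hb]
        by_cases hab : a + b ≤ t*m
        · simp [hab]
        · simp [hab, hlong i (a+b) (by omega)]
      · rw [hlong i b (by omega), mul_zero, hlong i (a+b) (by omega)]
        simp
    · rw [hlong j a (by omega), zero_mul, hlong i (a+b) (by omega)]
      simp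
  have hee : ∀ w w' : ZMod (n*m), e w' * e w = if w' = w then e w else 0 := by
    intro w w'
    have h := hmul' w w' 0 0
    simpa [hP0] using h
  have heP : ∀ (i : ZMod (n*m)) (a : ℕ), e (i + (a : ZMod (n*m))) * P i a = P i a := by
    intro i a
    have h := hmul' i (i + (a : ZMod (n*m))) 0 a
    rw [hP0] at h
    rw [h, if_pos rfl, zero_add]
  have hUP : ∀ (i : ZMod (n*m)) (b : ℕ), U * P i b =
      if (1 : ZMod (n*m)) = i + (b : ZMod (n*m)) then
        ∑ s : Fin ((t + n - 1) / n), c s • P i ((s:ℕ) * (n*m) + b) else 0 := by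
    intro i b
    rw [hUdef, Finset.sum_mul]
    by_cases hcnd : (1 : ZMod (n*m)) = i + (b : ZMod (n*m))
    · rw [if_pos hcnd]
      refine Finset.sum_congr rfl fun s _ => ?_
      rw [smul_mul_assoc, hmul', if_pos hcnd]
    · rw [if_neg hcnd]
      refine Finset.sum_eq_zero fun s _ => ?_
      rw [smul_mul_assoc, hmul', if_neg hcnd, smul_zero]
  have hPU : ∀ (i : ZMod (n*m)) (b : ℕ), P i b * U =
      if i = 1 then ∑ s : Fin ((t + n - 1) / n), c s • P 1 (b + (s:ℕ) * (n*m)) else 0 := by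
    intro i b
    rw [hUdef, Finset.mul_sum]
    have hcond : ∀ s : Fin ((t + n - 1) / n), (i = 1 + (((s:ℕ) * (n*m) : ℕ) : ZMod (n*m))) ↔ i = 1 := by
      intro s; rw [hcast, add_zero]
    by_cases hcnd : i = 1
    · rw [if_pos hcnd]
      refine Finset.sum_congr rfl fun s _ => ?_
      rw [mul_smul_comm, hmul', if_pos ((hcond s).mpr hcnd)]
    · rw [if_neg hcnd]
      refine Finset.sum_eq_zero fun s _ => ?_
      rw [mul_smul_comm, hmul', if_neg (fun h => hcnd ((hcond s).mp h)), smul_zero]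
  have hUe : ∀ w : ZMod (n*m), U * e w = if (1:ZMod (n*m)) = w then U else 0 := by
    intro w
    have h := hUP w 0
    simp only [Nat.cast_zero, add_zero] at h
    rw [hP0] at h
    rcases eq_or_ne (1 : ZMod (n*m)) w with h1 | h1
    · rw [h, if_pos h1, if_pos h1, hUdef]
      subst h1
      simp
    · rw [h, if_neg h1, if_neg h1]
  have heU : ∀ w : ZMod (n*m), e w * U = if w = 1 then U else 0 := by
    intro w
    have h := hPU w 0
    rw [hP0] at h
    rcases eq_or_ne w (1 : ZMod (n*m)) with h1 | h1
    · rw [h, if_pos h1, if_pos h1, hUdef]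
      simp
    · rw [h, if_neg h1, if_neg h1]
  have he1U : e 1 * U = U := by rw [heU, if_pos rfl]
  have hve1 : v * e 1 = U := by
    rw [hvdef, add_mul, sub_mul, one_mul, hee, if_pos rfl, sub_self, zero_add, hUe, if_pos rfl]
  have he1v : e 1 * v = U := by
    rw [hvdef, mul_add, mul_sub, mul_one, hee, if_pos rfl, sub_self, zero_add, he1U]
  have hveW : ∀ w : ZMod (n*m), w ≠ 1 → v * e w = e w := by
    intro w hw
    rw [hvdef, add_mul, sub_mul, one_mul, hee, if_neg (fun h => hw h.symm), sub_zero,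
      hUe, if_neg (fun h => hw h.symm), add_zero]
  have hve : ∀ w : ZMod (n*m), v * e w = e w * v := by
    intro w
    rcases eq_or_ne w (1 : ZMod (n*m)) with h1 | h1
    · subst h1
      rw [hve1, hvdef, mul_add, mul_sub, mul_one, hee, if_pos rfl, sub_self, zero_add, he1U]
    · rw [hveW w h1, hvdef, mul_add, mul_sub, mul_one, hee, if_neg h1, sub_zero,
        heU, if_neg h1, add_zero]
  have hvP : ∀ (i : ZMod (n*m)) (b : ℕ), (1:ZMod (n*m)) ≠ i + (b : ZMod (n*m)) →
      v * P i b = P i b := by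
    intro i b h
    have h1 : e 1 * P i b = 0 := by
      have hh := hmul' i 1 0 b
      rw [hP0] at hh
      rw [hh, if_neg h]
    rw [hvdef, add_mul, sub_mul, one_mul, h1, sub_zero, hUP, if_neg h, add_zero]
  have hvP' : ∀ (i : ZMod (n*m)) (b : ℕ), (1:ZMod (n*m)) = i + (b : ZMod (n*m)) →
      v * P i b = ∑ s : Fin ((t + n - 1) / n), c s • P i ((s:ℕ) * (n*m) + b) := by
    intro i b h
    have h1 : e 1 * P i b = P i b := by
      have hh := hmul' i 1 0 b
      rw [hP0] at hh
      rw [hh, if_pos h, zero_add]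
    rw [hvdef, add_mul, sub_mul, one_mul, h1, sub_self, zero_add, hUP, if_pos h]
  have hρP : ∀ (a : ℕ) (i : ZMod (n*m)), ρ (P i a) = P (i+1) a := by
    intro a
    induction a with
    | zero => intro i; rw [hP0, hP0, hρe]
    | succ a ih =>
      intro i
      rw [hPsucc, map_mul, hρβ, ih, hPsucc]
      have : i + (a : ZMod (n*m)) + 1 = i + 1 + (a : ZMod (n*m)) := by ring
      rw [this]
  have hβP0 : ∀ (i : ZMod (n*m)) (s : ℕ), β i * P i (s * (n*m)) = P i (s * (n*m) + 1) := by
    intro i s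
    rw [hPsucc, hcast, add_zero]
  have hρU : ρ U = ∑ s : Fin ((t + n - 1) / n), c s • P 2 ((s:ℕ) * (n * m)) := by
    rw [hUdef, map_sum]
    refine Finset.sum_congr rfl fun s _ => ?_
    rw [map_smul, hρP, one_add_one_eq_two]
  have key : ∀ j : ZMod (n*m),
      v * (ρ (μ (β j)) * e (j+1)) = μ (β (j+1)) * (v * e (j+1)) := by
    intro j
    by_cases hj0 : j = 0
    · subst hj0
      rw [zero_add]
      by_cases hj1 : (1 : ZMod (n*m)) = 0
      · -- degenerate case n*m = 1
        have h20 : (2:ZMod (n*m)) = 0 := by rw [← one_add_one_eq_two, hj1, add_zero]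
        have hve0 : v * e 0 = U := by rw [← hj1, hve1]
        have hb0U : β 0 * U = ∑ s : Fin ((t + n - 1) / n), c s • P 1 ((s:ℕ)*(n*m)+1) := by
          rw [hUdef, Finset.mul_sum]
          refine Finset.sum_congr rfl fun s _ => ?_
          rw [mul_smul_comm, show (0:ZMod (n*m)) = 1 from hj1.symm, hβP0]
        rw [hj1, hμβ0, map_mul, hρβ, hρU, zero_add, hj1, h20]
        rw [mul_assoc, ← hP1]
        have hstep0 : (∑ s : Fin ((t + n - 1) / n), c s • P 0 ((s:ℕ) * (n*m))) * P 0 1 =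
            ∑ s : Fin ((t + n - 1) / n), c s • P 0 ((s:ℕ)*(n*m)+1) := by
          rw [Finset.sum_mul]
          refine Finset.sum_congr rfl fun s _ => ?_
          rw [smul_mul_assoc, hmul', if_pos (by rw [Nat.cast_one, zero_add]; exact hj1.symm)]
        rw [hstep0, Finset.mul_sum]
        rw [hve0, mul_assoc, hb0U, Finset.mul_sum]
        refine Finset.sum_congr rfl fun s _ => ?_
        rw [mul_smul_comm, mul_smul_comm]
        rw [hvP' 0 ((s:ℕ)*(n*m)+1) (by rw [Nat.cast_add, hcast, Nat.cast_one, zero_add, zero_add])]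
        rw [hUP 1 ((s:ℕ)*(n*m)+1), if_pos (by rw [Nat.cast_add, hcast, Nat.cast_one, zero_add, hj1, add_zero])]
        rw [← hj1]
      · -- j = 0, 1 ≠ 0
        rw [hμβ0, map_mul, hρβ, hρU, hμβ 1 hj1, zero_add]
        rw [mul_assoc, ← hP1]
        have hstep : (∑ s : Fin ((t + n - 1) / n), c s • P 2 ((s:ℕ) * (n * m))) * P 1 1 =
            ∑ s : Fin ((t + n - 1) / n), c s • P 1 ((s:ℕ) * (n*m) + 1) := by
          rw [Finset.sum_mul]
          refine Finset.sum_congr rfl fun s _ => ?_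
          rw [smul_mul_assoc, hmul', if_pos (by norm_num)]
        rw [hstep, hve1, Finset.mul_sum]
        have hRHS : β 1 * U = ∑ s : Fin ((t + n - 1) / n), c s • P 1 ((s:ℕ) * (n*m) + 1) := by
          rw [hUdef, Finset.mul_sum]
          refine Finset.sum_congr rfl fun s _ => ?_
          rw [mul_smul_comm, hβP0]
        rw [hRHS]
        refine Finset.sum_congr rfl fun s _ => ?_
        rw [mul_smul_comm, hvP]
        intro hcon
        rw [Nat.cast_add, hcast, Nat.cast_one, zero_add] at hcon
        have h2 : (1:ZMod (n*m)) + 1 = 1 + 0 := by rw [add_zero]; exact hcon.symm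
        exact hj1 (add_left_cancel h2)
    · by_cases hj1 : j + 1 = 0
      · -- j ≠ 0, j + 1 = 0
        have h01 : (0 : ZMod (n*m)) ≠ 1 := by
          intro h0
          apply hj0
          calc j = j + 0 := (add_zero j).symm
          _ = j + 1 := by rw [h0]
          _ = 0 := hj1
        rw [hμβ j hj0, hρβ, hj1, ← hP1, hμβ0]
        rw [hvP' 0 1 (by rw [Nat.cast_one, zero_add]), hveW 0 (fun h => h01 h)]
        rw [mul_assoc, ← hP1]
        rw [hUP 0 1 ]
        rw [if_pos (by rw [Nat.cast_one, zero_add])]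
      · -- j ≠ 0, j + 1 ≠ 0
        have hj11 : j + 1 ≠ 1 := by
          intro h
          apply hj0
          have := add_right_cancel (b := (1:ZMod (n*m))) (a := j) (c := 0) (by rw [h, zero_add])
          exact this
        rw [hμβ j hj0, hρβ, hμβ (j+1) hj1, ← hP1]
        rw [hvP (j+1) 1 ?hc1, hveW (j+1) hj11, hP1]
        case hc1 =>
          intro hcon
          apply hj1
          rw [Nat.cast_one] at hcon
          have : j + 1 + 1 = 0 + 1 := by rw [zero_add, ← hcon]
          exact add_right_cancel this
  have main : ∀ (a : ℕ) (i : ZMod (n*m)), v * ρ (μ (P i a)) = μ (P (i+1) a) * v := by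
    intro a
    induction a with
    | zero =>
      intro i
      rw [hP0, hP0, hμe, hμe, hρe, hve]
    | succ a ih =>
      intro i
      have heμ : ∀ w : ZMod (n*m), e (w + (a : ZMod (n*m))) * μ (P w a) = μ (P w a) := by
        intro w
        rw [← hμe (w + (a : ZMod (n*m))), ← map_mul, heP]
      have hμPe : ρ (μ (P i a)) = e (i + (a : ZMod (n*m)) + 1) * ρ (μ (P i a)) := by
        conv_lhs => rw [← heμ i]
        rw [map_mul, hρe]
      rw [hPsucc, map_mul, map_mul]
      conv_lhs => rw [hμPe]
      rw [← mul_assoc (ρ (μ (β (i + (a : ZMod (n*m)))))), ← mul_assoc v]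
      rw [key (i + (a : ZMod (n*m)))]
      rw [hve (i + (a : ZMod (n*m)) + 1)]
      rw [mul_assoc (μ (β (i + (a : ZMod (n*m)) + 1))), mul_assoc (e (i + (a : ZMod (n*m)) + 1))]
      rw [ih i]
      rw [← mul_assoc (e (i + (a : ZMod (n*m)) + 1))]
      have hidx : i + (a : ZMod (n*m)) + 1 = (i + 1) + (a : ZMod (n*m)) := by ring
      rw [hidx, heμ (i+1)]
      rw [← mul_assoc, ← map_mul, ← hPsucc]
  have hall : ∀ x : 𝒩, v * ρ (μ x) = μ (ρ x) * v := by
    have hLM : ((LinearMap.mulLeft k v).comp (ρ.toLinearMap.comp μ.toLinearMap)) =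
        ((LinearMap.mulRight k v).comp (μ.toLinearMap.comp ρ.toLinearMap)) := by
      apply B.ext
      rintro ⟨i, a⟩
      simp only [LinearMap.comp_apply, AlgEquiv.toLinearMap_apply, LinearMap.mulLeft_apply,
        LinearMap.mulRight_apply]
      rw [hB]
      rw [hρP]
      exact main (a : ℕ) i
    intro x
    have h := DFunLike.congr_fun hLM x
    simpa using h
  have hc' : c ⟨0, hN0⟩ ≠ 0 := hc
  set c0 : k := c ⟨0, hN0⟩ with hc0def
  set z : 𝒩 := c0⁻¹ • U - e 1 with hzdef
  set y : 𝒩 := c0⁻¹ • e 1 + (1 - e 1) with hydef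
  have hyv : y * v = 1 + z := by
    have h : (1 - e 1) * v = 1 - e 1 := by
      rw [sub_mul, one_mul, he1v, hvdef]; abel
    rw [hydef, add_mul, smul_mul_assoc, he1v, h, hzdef]
    abel
  have hvy : v * y = 1 + z := by
    have h : v - U = 1 - e 1 := by rw [hvdef]; abel
    rw [hydef, mul_add, mul_smul_comm, hve1, mul_sub, mul_one, hve1, h, hzdef]
    abel
  have hz1 : z = ∑ s ∈ Finset.univ.erase (⟨0, hN0⟩ : Fin ((t + n - 1) / n)),
      (c0⁻¹ * c s) • P 1 ((s:ℕ) * (n*m)) := by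
    have hsplit : (c0⁻¹ * c (⟨0, hN0⟩ : Fin ((t + n - 1) / n))) •
          P 1 (((⟨0, hN0⟩ : Fin ((t + n - 1) / n)) : ℕ) * (n*m)) +
        ∑ s ∈ Finset.univ.erase (⟨0, hN0⟩ : Fin ((t + n - 1) / n)),
          (c0⁻¹ * c s) • P 1 ((s:ℕ)*(n*m)) =
        ∑ s : Fin ((t + n - 1) / n), (c0⁻¹ * c s) • P 1 ((s:ℕ)*(n*m)) := by
      exact Finset.add_sum_erase Finset.univ
        (fun s : Fin ((t + n - 1) / n) => (c0⁻¹ * c s) • P 1 ((s:ℕ)*(n*m)))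
        (Finset.mem_univ (⟨0, hN0⟩ : Fin ((t + n - 1) / n)))
    have h0 : (c0⁻¹ * c (⟨0, hN0⟩ : Fin ((t + n - 1) / n))) •
        P 1 (((⟨0, hN0⟩ : Fin ((t + n - 1) / n)) : ℕ) * (n*m)) = e 1 := by
      rw [inv_mul_cancel₀ hc', one_smul]
      simpa using hP0 1
    rw [hzdef, hUdef, Finset.smul_sum]
    simp only [smul_smul]
    rw [← hsplit, h0]
    abel
  have hWmul : ∀ (d d' : ℕ) (x y' : 𝒩),
      x ∈ Submodule.span k {x : 𝒩 | ∃ (i : ZMod (n*m)) (a : ℕ), d ≤ a ∧ x = P i a} →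
      y' ∈ Submodule.span k {x : 𝒩 | ∃ (i : ZMod (n*m)) (a : ℕ), d' ≤ a ∧ x = P i a} →
      x * y' ∈ Submodule.span k {x : 𝒩 | ∃ (i : ZMod (n*m)) (a : ℕ), d + d' ≤ a ∧ x = P i a} := by
    intro d d' x y' hx hy'
    have hle : Submodule.span k {x : 𝒩 | ∃ (i : ZMod (n*m)) (a : ℕ), d ≤ a ∧ x = P i a} *
        Submodule.span k {x : 𝒩 | ∃ (i : ZMod (n*m)) (a : ℕ), d' ≤ a ∧ x = P i a} ≤
        Submodule.span k {x : 𝒩 | ∃ (i : ZMod (n*m)) (a : ℕ), d + d' ≤ a ∧ x = P i a} := by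
      rw [Submodule.span_mul_span]
      rw [Submodule.span_le]
      rintro w ⟨p, ⟨i1, a1, ha1, rfl⟩, p2, ⟨i2, a2, ha2, rfl⟩, rfl⟩
      show P i1 a1 * P i2 a2 ∈ Submodule.span k
        {x : 𝒩 | ∃ (i : ZMod (n*m)) (a : ℕ), d + d' ≤ a ∧ x = P i a}
      rw [hmul']
      split_ifs
      · exact Submodule.subset_span ⟨i2, a1 + a2, by omega, rfl⟩
      · exact Submodule.zero_mem _
    exact hle (Submodule.mul_mem_mul hx hy')
  have hpow : ∀ K : ℕ, z ^ K ∈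
      Submodule.span k {x : 𝒩 | ∃ (i : ZMod (n*m)) (a : ℕ), K ≤ a ∧ x = P i a} := by
    intro K
    induction K with
    | zero =>
      rw [pow_zero, ← hone]
      exact Submodule.sum_mem _ fun i _ => Submodule.subset_span ⟨i, 0, le_rfl, (hP0 i).symm⟩
    | succ K ih =>
      rw [pow_succ]
      have hzw : z ∈ Submodule.span k
          {x : 𝒩 | ∃ (i : ZMod (n*m)) (a : ℕ), 1 ≤ a ∧ x = P i a} := by
        rw [hz1]
        refine Submodule.sum_mem _ fun s hs => Submodule.smul_mem _ _
          (Submodule.subset_span ⟨1, (s:ℕ)*(n*m), ?_, rfl⟩)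
        have hs0 : (s:ℕ) ≠ 0 := by
          intro h0
          exact (Finset.mem_erase.mp hs).1 (Fin.ext h0)
        exact Nat.one_le_iff_ne_zero.mpr (Nat.mul_ne_zero hs0 (by omega))
      exact hWmul K 1 _ _ ih hzw
  have hznil : z ^ (t*m+1) = 0 := by
    have hbot : Submodule.span k
        {x : 𝒩 | ∃ (i : ZMod (n*m)) (a : ℕ), t*m+1 ≤ a ∧ x = P i a} ≤ ⊥ := by
      rw [Submodule.span_le]
      rintro w ⟨i, a, ha, rfl⟩
      simp [hlong i a (by omega)]
    simpa using hbot (hpow (t*m+1))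
  obtain ⟨u1, hu1⟩ := IsNilpotent.isUnit_one_add ⟨t*m+1, hznil⟩
  have hcomm : v * (1 + z) = (1 + z) * v := by
    conv_lhs => rw [← hyv]
    conv_rhs => rw [← hvy]
    rw [← mul_assoc]
  have hcommu : Commute v ↑u1 := by rw [hu1]; exact hcomm
  have hinv : Commute v ↑u1⁻¹ := hcommu.units_inv_right
  have hrinv : v * (y * ↑u1⁻¹) = 1 := by
    rw [← mul_assoc, hvy, ← hu1, Units.mul_inv]
  have hlinv : (y * ↑u1⁻¹) * v = 1 := by
    rw [mul_assoc, ← hinv.eq, ← mul_assoc, hyv, ← hu1, Units.mul_inv]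
  refine ⟨⟨v, y * ↑u1⁻¹, hrinv, hlinv⟩, hvdef, ?_⟩
  intro x
  show ρ (μ x) = (y * ↑u1⁻¹) * μ (ρ x) * v
  rw [mul_assoc, ← hall x, ← mul_assoc, hlinv, one_mul]
end

section
/- Let k be a field and N ≥ 1. For each sequence c = (c_1,…,c_N) with c_i ∈ k and c_1 ≠ 0 there is a unique k-algebra automorphism f_c of k[x]/(x^{N+1}) with f_c(x) = Σ_{i=1}^N c_i x^i; every k-algebra automorphism of k[x]/(x^{N+1}) equals f_c for a unique such c; and f_{c'} ∘ f_c = f_{c·c'}, where c·c' is the product of 𝒮_N(k). In particular, the group 𝒮_N(k) is isomorphic to the group of k-algebra automorphisms of k[x]/(x^{N+1}). -/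
/-- The product of the group `𝒮_N(k)` of sequences `c = (c_1,…,c_N)` with `c_1 ≠ 0`
(indexed here by `Fin N`, index `i` corresponding to `c_{i+1}`):
`(c·c')_i = Σ_{j=1}^i c_j Σ_{k_1+⋯+k_j=i} c'_{k_1}⋯c'_{k_j}`. The inner sum over
compositions of `i` into `j` positive parts is expressed as the coefficient of `X^i`
in `(Σ_{s=1}^N c'_s X^s)^j`. -/
noncomputable def seqMul {k : Type*} [CommRing k] {N : ℕ} (c c' : Fin N → k) : Fin N → k :=
  fun i => ∑ j : Fin ((i : ℕ) + 1),
    c (Fin.castLE i.isLt j) *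
      ((∑ s : Fin N, Polynomial.C (c' s) * Polynomial.X ^ ((s : ℕ) + 1)) ^ ((j : ℕ) + 1)).coeff
        ((i : ℕ) + 1)

/-- The truncated polynomial algebra `k[x]/(x^{N+1})`. -/
abbrev TruncPolyAlg (k : Type*) [Field k] (N : ℕ) : Type _ :=
  Polynomial k ⧸ Ideal.span {(Polynomial.X : Polynomial k) ^ (N + 1)}

/-- The image `x` of the variable `X` in `k[x]/(x^{N+1})`. -/
noncomputable def truncX (k : Type*) [Field k] (N : ℕ) : TruncPolyAlg k N :=
  Ideal.Quotient.mk _ Polynomial.X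

namespace Trunc13
open Polynomial

variable {k : Type*} [Field k] {N : ℕ}

/-- The polynomial `∑ c_i X^{i+1}`. -/
noncomputable def Pc (N : ℕ) (c : Fin N → k) : k[X] :=
  ∑ i : Fin N, C (c i) * X ^ ((i : ℕ) + 1)

lemma coeff_Pc_zero (c : Fin N → k) : (Pc N c).coeff 0 = 0 := by
  simp [Pc, finset_sum_coeff, coeff_X_pow]

lemma X_dvd_Pc (c : Fin N → k) : X ∣ Pc N c :=
  X_dvd_iff.mpr (coeff_Pc_zero c)

lemma coeff_Pc (c : Fin N → k) (i : Fin N) : (Pc N c).coeff ((i : ℕ) + 1) = c i := by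
  rw [Pc, finset_sum_coeff]
  rw [Finset.sum_eq_single i]
  · simp
  · intro j _ hji
    have hne : ((i : ℕ) + 1 : ℕ) ≠ (j : ℕ) + 1 := fun h => hji (Fin.ext (by omega))
    rw [coeff_C_mul, coeff_X_pow, if_neg hne, mul_zero]
  · simp

lemma Pc_sub (c c' : Fin N → k) : Pc N c - Pc N c' = Pc N (c - c') := by
  rw [Pc, Pc, Pc, ← Finset.sum_sub_distrib]
  refine Finset.sum_congr rfl fun i _ => ?_
  rw [← sub_mul, ← C_sub]
  rfl

lemma mk_eq_zero_iff (Q : k[X]) :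
    Ideal.Quotient.mk (Ideal.span {(X : k[X]) ^ (N + 1)}) Q = 0 ↔ X ^ (N + 1) ∣ Q := by
  rw [Ideal.Quotient.eq_zero_iff_mem, Ideal.mem_span_singleton]

lemma truncX_pow : truncX k N ^ (N + 1) = 0 := by
  show Ideal.Quotient.mk _ (X : k[X]) ^ (N+1) = 0
  rw [← map_pow, mk_eq_zero_iff]

lemma truncX_pow_ge {m : ℕ} (h : N + 1 ≤ m) : truncX k N ^ m = 0 := by
  obtain ⟨t, rfl⟩ := Nat.exists_eq_add_of_le h
  rw [pow_add, truncX_pow, zero_mul]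

lemma mk_eq_mk_of_coeff {Q₁ Q₂ : k[X]} (h : ∀ m ≤ N, Q₁.coeff m = Q₂.coeff m) :
    Ideal.Quotient.mk (Ideal.span {(X : k[X]) ^ (N + 1)}) Q₁ = Ideal.Quotient.mk _ Q₂ := by
  rw [← sub_eq_zero, ← map_sub, mk_eq_zero_iff]
  rw [X_pow_dvd_iff]
  intro d hd
  simp [h d (Nat.lt_succ_iff.mp hd)]

lemma mk_eq_sum (Q : k[X]) :
    Ideal.Quotient.mk (Ideal.span {(X : k[X]) ^ (N + 1)}) Q =
      ∑ m ∈ Finset.range (N + 1), Q.coeff m • truncX k N ^ m := by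
  have : (∑ m ∈ Finset.range (N + 1), Q.coeff m • truncX k N ^ m)
      = Ideal.Quotient.mk (Ideal.span {(X : k[X]) ^ (N + 1)})
        (∑ m ∈ Finset.range (N + 1), C (Q.coeff m) * X ^ m) := by
    rw [map_sum]
    refine Finset.sum_congr rfl fun m _ => ?_
    rw [← smul_eq_C_mul, ← Ideal.Quotient.mkₐ_eq_mk k, map_smul, map_pow]
    rfl
  rw [this]
  refine (mk_eq_mk_of_coeff fun m hm => ?_)
  rw [finset_sum_coeff]
  rw [Finset.sum_eq_single m]
  · simp
  · intro j _ hj; simp [coeff_X_pow, hj, Ne.symm hj]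
  · intro h; exact absurd (Finset.mem_range.mpr (Nat.lt_succ_of_le hm)) h

lemma mk_Pc (c : Fin N → k) :
    Ideal.Quotient.mk (Ideal.span {(X : k[X]) ^ (N + 1)}) (Pc N c) =
      ∑ i : Fin N, c i • truncX k N ^ ((i : ℕ) + 1) := by
  rw [Pc, map_sum]
  refine Finset.sum_congr rfl fun i _ => ?_
  rw [← smul_eq_C_mul, ← Ideal.Quotient.mkₐ_eq_mk k, map_smul, map_pow]
  rfl

lemma rep_inj {c c' : Fin N → k} (h : (∑ i : Fin N, c i • truncX k N ^ ((i : ℕ) + 1)) =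
    ∑ i : Fin N, c' i • truncX k N ^ ((i : ℕ) + 1)) : c = c' := by
  rw [← mk_Pc, ← mk_Pc, ← sub_eq_zero, ← map_sub, Pc_sub, mk_eq_zero_iff, X_pow_dvd_iff] at h
  funext i
  have := h ((i : ℕ) + 1) (Nat.succ_lt_succ i.isLt)
  rw [coeff_Pc] at this
  simpa [sub_eq_zero] using this


/-- The algebra endomorphism sending `x` to `Pc N c`. -/
noncomputable def lifta (c : Fin N → k) : TruncPolyAlg k N →ₐ[k] TruncPolyAlg k N :=
  Ideal.Quotient.liftₐ _ (aeval (Ideal.Quotient.mk _ (Pc N c))) (by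
    intro p hp
    rw [Ideal.mem_span_singleton] at hp
    obtain ⟨q, rfl⟩ := hp
    rw [map_mul, map_pow, aeval_X, ← map_pow, (mk_eq_zero_iff _).mpr
      (pow_dvd_pow_of_dvd (X_dvd_Pc c) (N + 1)), zero_mul])

lemma lifta_apply (c : Fin N → k) (Q : k[X]) :
    lifta c (Ideal.Quotient.mk _ Q) = Ideal.Quotient.mk _ (Q.comp (Pc N c)) := by
  rw [lifta, Ideal.Quotient.liftₐ_apply]
  show aeval (Ideal.Quotient.mk _ (Pc N c)) Q = _
  rw [comp_eq_aeval, ← Ideal.Quotient.mkₐ_eq_mk k, ← aeval_algHom_apply,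
    Ideal.Quotient.mkₐ_eq_mk]

lemma lifta_truncX (c : Fin N → k) :
    lifta c (truncX k N) = Ideal.Quotient.mk _ (Pc N c) := by
  rw [truncX, lifta_apply, X_comp]

lemma hom_ext {A : Type*} [Semiring A] [Algebra k A]
    {f g : TruncPolyAlg k N →ₐ[k] A} (h : f (truncX k N) = g (truncX k N)) : f = g := by
  refine Ideal.Quotient.algHom_ext k (Polynomial.algHom_ext ?_)
  simpa [Ideal.Quotient.mkₐ_eq_mk, truncX] using h

lemma equiv_ext {f g : TruncPolyAlg k N ≃ₐ[k] TruncPolyAlg k N}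
    (h : f (truncX k N) = g (truncX k N)) : f = g := by
  have := hom_ext (f := f.toAlgHom) (g := g.toAlgHom) h
  exact AlgEquiv.ext fun a => AlgHom.congr_fun this a

lemma coeff_pow_pos {P : k[X]} (hP : X ∣ P) {i m : ℕ} (h : m < i) : (P ^ i).coeff m = 0 :=
  X_pow_dvd_iff.mp (pow_dvd_pow_of_dvd hP i) m h

lemma coeff_pow_self {P : k[X]} (hP : X ∣ P) (m : ℕ) : (P ^ m).coeff m = P.coeff 1 ^ m := by
  obtain ⟨R, rfl⟩ := hP
  have h1 := coeff_X_pow_mul (R ^ m) m 0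
  rw [zero_add] at h1
  have h2 : (X * R).coeff 1 = R.coeff 0 := by simpa using coeff_X_mul R 0
  rw [mul_pow, h1, coeff_zero_eq_eval_zero, eval_pow, ← coeff_zero_eq_eval_zero, h2]

lemma lifta_injective (hN : 1 ≤ N) {c : Fin N → k} (hc : c ⟨0, hN⟩ ≠ 0) :
    Function.Injective (lifta (N := N) c) := by
  have hc1 : (Pc N c).coeff 1 = c ⟨0, hN⟩ := coeff_Pc c ⟨0, hN⟩
  refine (injective_iff_map_eq_zero _).mpr fun a ha => ?_
  obtain ⟨Q, rfl⟩ := Ideal.Quotient.mk_surjective a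
  rw [lifta_apply, mk_eq_zero_iff] at ha
  rw [mk_eq_zero_iff, X_pow_dvd_iff]
  by_contra hQ
  push_neg at hQ
  obtain ⟨d, hd, hd0⟩ := hQ
  have hQ0 : Q ≠ 0 := fun h => hd0 (by simp [h])
  set m := Q.natTrailingDegree with hm
  have hmd : m ≤ d := natTrailingDegree_le_of_ne_zero hd0
  have hcm : (Q.comp (Pc N c)).coeff m = Q.coeff m * c ⟨0, hN⟩ ^ m := by
    rw [comp_eq_sum_left, sum_def, finset_sum_coeff]
    rw [Finset.sum_eq_single m]
    · rw [coeff_C_mul, coeff_pow_self (X_dvd_Pc c), hc1]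
    · intro e he hem
      have : m < e := lt_of_le_of_ne (natTrailingDegree_le_of_ne_zero (mem_support_iff.mp he)) (Ne.symm hem)
      rw [coeff_C_mul, coeff_pow_pos (X_dvd_Pc c) this, mul_zero]
    · intro hns
      exact absurd (mem_support_iff.mpr (trailingCoeff_nonzero_iff_nonzero.mpr hQ0)) hns
  have hz := X_pow_dvd_iff.mp ha m (lt_of_le_of_lt hmd hd)
  rw [hcm] at hz
  exact (mul_ne_zero (trailingCoeff_nonzero_iff_nonzero.mpr hQ0) (pow_ne_zero m hc)) hz

instance : Module.Finite k (TruncPolyAlg k N) := by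
  classical
  refine ⟨⟨(Finset.range (N + 1)).image (fun m => truncX k N ^ m), ?_⟩⟩
  rw [eq_top_iff]
  rintro a -
  obtain ⟨Q, rfl⟩ := Ideal.Quotient.mk_surjective a
  rw [mk_eq_sum]
  refine Submodule.sum_smul_mem _ _ fun m hm => Submodule.subset_span ?_
  exact Finset.mem_coe.mpr (Finset.mem_image_of_mem _ hm)

lemma lifta_bijective (hN : 1 ≤ N) {c : Fin N → k} (hc : c ⟨0, hN⟩ ≠ 0) :
    Function.Bijective (lifta (N := N) c) := by
  have hinj := lifta_injective hN hc
  exact ⟨hinj, (LinearMap.injective_iff_surjective (f := (lifta (N := N) c).toLinearMap)).mp hinj⟩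


lemma Pc_def (c : Fin N → k) : Pc N c = ∑ i : Fin N, C (c i) * X ^ ((i : ℕ) + 1) := rfl

lemma comp_Pc (c : Fin N → k) (q : k[X]) :
    (Pc N c).comp q = ∑ i : Fin N, C (c i) * q ^ ((i : ℕ) + 1) := by
  rw [Pc, comp_eq_aeval, map_sum]
  refine Finset.sum_congr rfl fun i _ => ?_
  rw [map_mul, map_pow, aeval_X, aeval_C, Polynomial.algebraMap_eq]

lemma comp_key (c c' : Fin N → k) :
    Ideal.Quotient.mk (Ideal.span {(X : k[X]) ^ (N + 1)}) ((Pc N c).comp (Pc N c')) =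
      Ideal.Quotient.mk _ (Pc N (seqMul c c')) := by
  classical
  refine mk_eq_mk_of_coeff fun m hm => ?_
  rw [comp_Pc, finset_sum_coeff]
  simp only [coeff_C_mul]
  match m, hm with
  | 0, _ =>
    rw [coeff_Pc_zero]
    refine Finset.sum_eq_zero fun i _ => ?_
    rw [X_dvd_iff.mp (dvd_pow (X_dvd_Pc c') (Nat.succ_ne_zero _)), mul_zero]
  | (n + 1), hm =>
    have hnN : n < N := Nat.lt_of_succ_le hm
    rw [show (Pc N (seqMul c c')).coeff (n + 1) = seqMul c c' ⟨n, hnN⟩ from coeff_Pc _ ⟨n, hnN⟩]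
    simp only [seqMul, ← Pc_def]
    set F : ℕ → k := fun j =>
      if h : j < N then c ⟨j, h⟩ * ((Pc N c') ^ (j + 1)).coeff (n + 1) else 0 with hF
    have hL : (∑ i : Fin N, c i * ((Pc N c') ^ ((i : ℕ) + 1)).coeff (n + 1)) =
        ∑ j ∈ Finset.range N, F j := by
      rw [← Fin.sum_univ_eq_sum_range F N]
      refine Finset.sum_congr rfl fun i _ => ?_
      simp only [hF]
      rw [dif_pos i.isLt]
    have hR : (∑ j : Fin (n + 1),
        c (Fin.castLE (show (⟨n, hnN⟩ : Fin N).val + 1 ≤ N from hnN) j) *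
          ((Pc N c') ^ ((j : ℕ) + 1)).coeff (n + 1)) = ∑ j ∈ Finset.range (n + 1), F j := by
      rw [← Fin.sum_univ_eq_sum_range F (n + 1)]
      refine Finset.sum_congr rfl fun j _ => ?_
      have hjN : (j : ℕ) < N := lt_of_lt_of_le j.isLt hm
      simp only [hF]
      rw [dif_pos hjN]
      congr 1
    have hsub : (∑ j ∈ Finset.range (n + 1), F j) = ∑ j ∈ Finset.range N, F j := by
      refine Finset.sum_subset (Finset.range_subset_range.mpr hm) fun j hj hj' => ?_
      rw [Finset.mem_range] at hj
      rw [Finset.mem_range, not_lt] at hj'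
      simp only [hF]
      rw [dif_pos hj, coeff_pow_pos (X_dvd_Pc c') (by omega), mul_zero]
    rw [hL, ← hsub, ← hR]

end Trunc13

open Trunc13 Polynomial in
/-- let `k` be a field and `N ≥ 1`. For each sequence `c = (c_1,…,c_N)` with
`c_1 ≠ 0` there is a unique `k`-algebra automorphism `f_c` of `k[x]/(x^{N+1})` with
`f_c(x) = Σ_{i=1}^N c_i x^i`; every `k`-algebra automorphism of `k[x]/(x^{N+1})` equals
`f_c` for a unique such `c`; and `f_{c'} ∘ f_c = f_{c·c'}`, where `c·c'` is the product of
`𝒮_N(k)`. In particular, `𝒮_N(k)` is isomorphic to the automorphism group of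
`k[x]/(x^{N+1})`. -/
theorem truncPoly_aut_classification (k : Type*) [Field k] (N : ℕ) (hN : 1 ≤ N) :
    (∀ c : Fin N → k, c ⟨0, hN⟩ ≠ 0 →
      ∃! f : TruncPolyAlg k N ≃ₐ[k] TruncPolyAlg k N,
        f (truncX k N) = ∑ i : Fin N, c i • truncX k N ^ ((i : ℕ) + 1)) ∧
    (∀ f : TruncPolyAlg k N ≃ₐ[k] TruncPolyAlg k N,
      ∃! c : {c : Fin N → k // c ⟨0, hN⟩ ≠ 0},
        f (truncX k N) = ∑ i : Fin N, c.1 i • truncX k N ^ ((i : ℕ) + 1)) ∧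
    (∀ (c c' : Fin N → k), c ⟨0, hN⟩ ≠ 0 → c' ⟨0, hN⟩ ≠ 0 →
      ∀ (fc fc' fcc' : TruncPolyAlg k N ≃ₐ[k] TruncPolyAlg k N),
        fc (truncX k N) = (∑ i : Fin N, c i • truncX k N ^ ((i : ℕ) + 1)) →
        fc' (truncX k N) = (∑ i : Fin N, c' i • truncX k N ^ ((i : ℕ) + 1)) →
        fcc' (truncX k N) = (∑ i : Fin N, seqMul c c' i • truncX k N ^ ((i : ℕ) + 1)) →
        ∀ a, fc' (fc a) = fcc' a) := by
  refine ⟨?_, ?_, ?_⟩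
  · intro c hc
    refine ⟨AlgEquiv.ofBijective (lifta c) (lifta_bijective hN hc), ?_, ?_⟩
    · show lifta c (truncX k N) = _
      rw [lifta_truncX, mk_Pc]
    · intro g hg
      refine equiv_ext ?_
      rw [hg]
      show _ = lifta c (truncX k N)
      rw [lifta_truncX, mk_Pc]
  · intro f
    obtain ⟨Q, hQ⟩ := Ideal.Quotient.mk_surjective (f (truncX k N))
    have hpow : Ideal.Quotient.mk (Ideal.span {(X : k[X]) ^ (N + 1)}) (Q ^ (N + 1)) = 0 := by
      rw [map_pow, hQ, ← map_pow, truncX_pow, map_zero]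
    have h0 : Q.coeff 0 = 0 := by
      have := X_pow_dvd_iff.mp ((mk_eq_zero_iff _).mp hpow) 0 (Nat.succ_pos N)
      rw [coeff_zero_eq_eval_zero, eval_pow, ← coeff_zero_eq_eval_zero] at this
      exact pow_eq_zero_iff (Nat.succ_ne_zero N) |>.mp this
    set c : Fin N → k := fun i => Q.coeff ((i : ℕ) + 1) with hcdef
    have hc1 : c ⟨0, hN⟩ ≠ 0 := by
      intro h1
      have h1' : Q.coeff 1 = 0 := h1
      have hX2 : X ^ 2 ∣ Q := by
        rw [X_pow_dvd_iff]
        intro d hd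
        interval_cases d
        · exact h0
        · exact h1'
      have hXN : (X : k[X]) ^ (N + 1) ∣ Q ^ N := by
        obtain ⟨R, hR⟩ := hX2
        rw [hR, mul_pow, ← pow_mul]
        exact dvd_mul_of_dvd_left (pow_dvd_pow X (by omega)) _
      have hz : truncX k N ^ N = 0 := by
        apply f.injective
        rw [map_pow, ← hQ, ← map_pow, (mk_eq_zero_iff _).mpr hXN, map_zero]
      have hz' : Ideal.Quotient.mk (Ideal.span {(X : k[X]) ^ (N + 1)}) (X ^ N) = 0 := by
        rw [map_pow]; exact hz
      have hd := X_pow_dvd_iff.mp ((mk_eq_zero_iff _).mp hz') N (Nat.lt_succ_self N)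
      rw [coeff_X_pow_self] at hd
      exact one_ne_zero hd
    refine ⟨⟨c, hc1⟩, ?_, ?_⟩
    · show f (truncX k N) = _
      rw [← hQ, mk_eq_sum, Finset.sum_range_succ']
      rw [h0, zero_smul, add_zero, ← Fin.sum_univ_eq_sum_range
        (fun i => Q.coeff (i + 1) • truncX k N ^ (i + 1)) N]
      try rfl
    · rintro ⟨c', hc'⟩ hval
      have heq : (∑ i : Fin N, c' i • truncX k N ^ ((i : ℕ) + 1)) =
          ∑ i : Fin N, c i • truncX k N ^ ((i : ℕ) + 1) := by
        rw [← hval, ← hQ, mk_eq_sum, Finset.sum_range_succ', h0, zero_smul, add_zero,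
          ← Fin.sum_univ_eq_sum_range (fun i => Q.coeff (i + 1) • truncX k N ^ (i + 1)) N]
        try rfl
      exact Subtype.ext (rep_inj heq)
  · intro c c' hc hc' fc fc' fcc' h1 h2 h3 a
    have e1 : fc.toAlgHom = lifta c := hom_ext (by rw [lifta_truncX, mk_Pc]; exact h1)
    have e2 : fc'.toAlgHom = lifta c' := hom_ext (by rw [lifta_truncX, mk_Pc]; exact h2)
    have e3 : fcc'.toAlgHom = lifta (seqMul c c') :=
      hom_ext (by rw [lifta_truncX, mk_Pc]; exact h3)
    have ecomp : (lifta (N := N) c').comp (lifta c) = lifta (seqMul c c') := by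
      refine hom_ext ?_
      rw [AlgHom.comp_apply, lifta_truncX, lifta_truncX, lifta_apply, comp_key]
    have hfa : fc a = lifta c a := AlgHom.congr_fun e1 a
    have hfa' : fc' (fc a) = lifta c' (lifta c a) := by
      rw [hfa]; exact AlgHom.congr_fun e2 _
    rw [hfa', show fcc' a = lifta (seqMul c c') a from AlgHom.congr_fun e3 a, ← ecomp]
    rfl
end
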